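/- If A ⊆ ℝ is Lebesgue measurable with λ(A) = 0, then A is nowhere dense in the I-sparse set topology: the interior (with respect to the topology whose open sets are 𝒰) of the 𝒰-closure of A is empty. -/

import Mathlib

open MeasureTheory Filter Set
open scoped ENNReal

noncomputable section

/-- A nontrivial admissible ideal of subsets of ℕ: closed under subsets and
finite unions, contains every finite set, and does not contain ℕ itself. -/
structure AdmissibleIdeal : Type where
  carrier : Set (Set ℕ)
  subset_mem : ∀ ⦃A B : Set ℕ⦄, A ∈ carrier → B ⊆ A → B ∈ carrier
  union_mem : ∀ ⦃A B : Set ℕ⦄, A ∈ carrier → B ∈ carrier → A ∪ B ∈ carrier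
  finite_mem : ∀ A : Set ℕ, A.Finite → A ∈ carrier
  univ_not_mem : (Set.univ : Set ℕ) ∉ carrier

/-- The filter F(I) = {M ⊆ ℕ : ℕ \ M ∈ I} associated with the ideal I. -/
def AdmissibleIdeal.filter (I : AdmissibleIdeal) : Filter ℕ :=
  Filter.comk (· ∈ I.carrier) (I.finite_mem ∅ Set.finite_empty)
    (fun _t ht _s hs => I.subset_mem ht hs)
    (fun _s hs _t ht => I.union_mem hs ht)

/-- A sequence of closed intervals admissible about the point `p`:
each `J n` is a closed interval containing `p`, and
`{n : 0 < λ(J n) < 1/n} ∈ F(I)`. -/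
def AdmissibleSeq (I : AdmissibleIdeal) (p : ℝ) (J : ℕ → Set ℝ) : Prop :=
  (∀ n, ∃ a b : ℝ, a ≤ b ∧ J n = Set.Icc a b) ∧ (∀ n, p ∈ J n) ∧
    {n : ℕ | 0 < volume (J n) ∧ volume (J n) < (n : ℝ≥0∞)⁻¹} ∈ I.filter

/-- The sequence n ↦ λ(E ∩ J n)/λ(J n) (interpreted as 0 when λ(J n) = 0). -/
def ratioSeq (E : Set ℝ) (J : ℕ → Set ℝ) : ℕ → ℝ :=
  fun n => (volume (E ∩ J n) / volume (J n)).toReal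

/-- Upper I-density of `E` at `p`: sup over admissible sequences of the
limsup along `F(I)` of the measure ratios. -/
def upperIDensity (I : AdmissibleIdeal) (p : ℝ) (E : Set ℝ) : ℝ :=
  sSup {l : ℝ | ∃ J : ℕ → Set ℝ, AdmissibleSeq I p J ∧
    l = Filter.limsup (ratioSeq E J) I.filter}

/-- Lower I-density of `E` at `p`: inf over admissible sequences of the
liminf along `F(I)` of the measure ratios. -/
def lowerIDensity (I : AdmissibleIdeal) (p : ℝ) (E : Set ℝ) : ℝ :=
  sInf {l : ℝ | ∃ J : ℕ → Set ℝ, AdmissibleSeq I p J ∧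
    l = Filter.liminf (ratioSeq E J) I.filter}

/-- `C` is a measurable cover of `A`. -/
def IsMeasurableCover (C A : Set ℝ) : Prop :=
  MeasurableSet C ∧ A ⊆ C ∧
    ∀ F : Set ℝ, MeasurableSet F → F ⊆ C \ A → volume F = 0

/-- `A` is I-sparse at `x`, i.e. `A ∈ S_I(x)`. -/
def ISparseAt (I : AdmissibleIdeal) (A : Set ℝ) (x : ℝ) : Prop :=
  ∀ B : Set ℝ, MeasurableSet B → upperIDensity I x B < 1 →
    ∀ C : Set ℝ, IsMeasurableCover C A → upperIDensity I x (C ∪ B) < 1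

/-- The I-density topology T_I. -/
def IDensityTopology (I : AdmissibleIdeal) : Set (Set ℝ) :=
  {E | MeasurableSet E ∧ ∀ x ∈ E, lowerIDensity I x E = 1}

/-- The I-sparse set topology 𝒰. -/
def sparseTop (I : AdmissibleIdeal) : Set (Set ℝ) :=
  {E | ∀ x ∈ E, ISparseAt I Eᶜ x}

/-! ### Auxiliary lemmas -/

lemma AdmissibleIdeal.filter_neBot (I : AdmissibleIdeal) : I.filter.NeBot := by
  refine ⟨fun h => I.univ_not_mem ?_⟩
  have : (∅ : Set ℕ) ∈ I.filter := h ▸ Filter.mem_bot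
  simpa [AdmissibleIdeal.filter, Filter.mem_comk] using this

/-- A concrete admissible sequence about any point. -/
lemma exists_admissibleSeq (I : AdmissibleIdeal) (x : ℝ) :
    AdmissibleSeq I x (fun n => Set.Icc x (x + ((2 * (n + 1) : ℕ) : ℝ)⁻¹)) := by
  have hpos : ∀ n : ℕ, (0 : ℝ) < ((2 * (n + 1) : ℕ) : ℝ)⁻¹ := by
    intro n; positivity
  refine ⟨fun n => ⟨x, x + ((2 * (n + 1) : ℕ) : ℝ)⁻¹, by linarith [hpos n], rfl⟩,
    fun n => ⟨le_refl x, by linarith [hpos n]⟩, ?_⟩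
  have hvol : ∀ n : ℕ,
      volume (Set.Icc x (x + ((2 * (n + 1) : ℕ) : ℝ)⁻¹)) =
        ENNReal.ofReal ((2 * (n + 1) : ℕ) : ℝ)⁻¹ := by
    intro n; rw [Real.volume_Icc]; ring_nf
  refine Filter.mem_of_superset Filter.univ_mem ?_
  intro n _
  refine ⟨?_, ?_⟩
  · rw [hvol n]; exact ENNReal.ofReal_pos.mpr (hpos n)
  · rw [hvol n]
    rcases Nat.eq_zero_or_pos n with hn | hn
    · subst hn; simp
    · have hn' : (0 : ℝ) < (n : ℝ) := by exact_mod_cast hn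
      have : ((n : ℝ≥0∞))⁻¹ = ENNReal.ofReal ((n : ℝ))⁻¹ := by
        rw [← ENNReal.ofReal_natCast, ← ENNReal.ofReal_inv_of_pos hn']
      rw [this]
      refine (ENNReal.ofReal_lt_ofReal_iff (by positivity)).mpr ?_
      have h1 : (n : ℝ) < ((2 * (n + 1) : ℕ) : ℝ) := by
        push_cast; linarith
      exact inv_strictAnti₀ hn' h1

lemma ratioSeq_nonneg (E : Set ℝ) (J : ℕ → Set ℝ) (n : ℕ) : 0 ≤ ratioSeq E J n :=
  ENNReal.toReal_nonneg

lemma ratioSeq_le_one (E : Set ℝ) (J : ℕ → Set ℝ) (n : ℕ) : ratioSeq E J n ≤ 1 := by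
  have hle : volume (E ∩ J n) ≤ volume (J n) := measure_mono inter_subset_right
  have h : volume (E ∩ J n) / volume (J n) ≤ 1 := by
    rcases eq_or_ne (volume (J n)) 0 with h0 | h0
    · have : volume (E ∩ J n) = 0 := le_antisymm (h0 ▸ hle) zero_le
      simp [this]
    · rcases eq_or_ne (volume (J n)) ⊤ with ht | ht
      · simp [ht]
      · exact (ENNReal.div_le_iff h0 ht).mpr (by simpa using hle)
  calc (volume (E ∩ J n) / volume (J n)).toReal ≤ (1 : ℝ≥0∞).toReal :=
        ENNReal.toReal_mono (by norm_num) h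
    _ = 1 := by simp

/-- Every limsup of ratios is at most 1. -/
lemma limsup_ratio_le_one (I : AdmissibleIdeal) (E : Set ℝ) (J : ℕ → Set ℝ) :
    Filter.limsup (ratioSeq E J) I.filter ≤ 1 := by
  haveI := I.filter_neBot
  refine Filter.limsup_le_of_le ?_ (Filter.Eventually.of_forall (ratioSeq_le_one E J))
  exact Filter.isCoboundedUnder_le_of_le I.filter (x := 0) (ratioSeq_nonneg E J)

lemma upperIDensity_le_one (I : AdmissibleIdeal) (p : ℝ) (E : Set ℝ) :
    upperIDensity I p E ≤ 1 := by
  unfold upperIDensity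
  rcases eq_or_ne {l : ℝ | ∃ J : ℕ → Set ℝ, AdmissibleSeq I p J ∧
      l = Filter.limsup (ratioSeq E J) I.filter} ∅ with h | h
  · rw [h, Real.sSup_empty]; norm_num
  · refine csSup_le (nonempty_iff_ne_empty.mpr h) ?_
    rintro l ⟨J, _, rfl⟩
    exact limsup_ratio_le_one I E J

lemma upperIDensity_empty (I : AdmissibleIdeal) (p : ℝ) :
    upperIDensity I p (∅ : Set ℝ) = 0 := by
  haveI := I.filter_neBot
  have hset : {l : ℝ | ∃ J : ℕ → Set ℝ, AdmissibleSeq I p J ∧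
      l = Filter.limsup (ratioSeq (∅ : Set ℝ) J) I.filter} = {0} := by
    ext l
    constructor
    · rintro ⟨J, _, rfl⟩
      have : ratioSeq (∅ : Set ℝ) J = fun _ => (0 : ℝ) := by
        funext n; simp [ratioSeq]
      rw [this, Filter.limsup_const]
      rfl
    · rintro rfl
      refine ⟨_, exists_admissibleSeq I p, ?_⟩
      have : ratioSeq (∅ : Set ℝ) (fun n => Set.Icc p (p + ((2 * (n + 1) : ℕ) : ℝ)⁻¹))
          = fun _ => (0 : ℝ) := by funext n; simp [ratioSeq]
      rw [this, Filter.limsup_const]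
  rw [upperIDensity, hset, csSup_singleton]

lemma one_le_upperIDensity_univ (I : AdmissibleIdeal) (p : ℝ) :
    1 ≤ upperIDensity I p (Set.univ : Set ℝ) := by
  haveI := I.filter_neBot
  obtain ⟨h1, h2, h3⟩ := exists_admissibleSeq I p
  set J : ℕ → Set ℝ := fun n => Set.Icc p (p + ((2 * (n + 1) : ℕ) : ℝ)⁻¹) with hJ
  have hlim : Filter.limsup (ratioSeq (Set.univ : Set ℝ) J) I.filter = 1 := by
    have hev : ratioSeq (Set.univ : Set ℝ) J =ᶠ[I.filter] fun _ => (1 : ℝ) := by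
      filter_upwards [h3] with n hn
      have h0 : volume (J n) ≠ 0 := ne_of_gt hn.1
      have ht : volume (J n) ≠ ⊤ := ne_of_lt (lt_of_lt_of_le hn.2 le_top)
      simp [ratioSeq, ENNReal.div_self h0 ht]
    rw [Filter.limsup_congr hev, Filter.limsup_const]
  have hmem : (1 : ℝ) ∈ {l : ℝ | ∃ J : ℕ → Set ℝ, AdmissibleSeq I p J ∧
      l = Filter.limsup (ratioSeq (Set.univ : Set ℝ) J) I.filter} :=
    ⟨J, ⟨h1, h2, h3⟩, hlim.symm⟩
  have hbdd : BddAbove {l : ℝ | ∃ J : ℕ → Set ℝ, AdmissibleSeq I p J ∧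
      l = Filter.limsup (ratioSeq (Set.univ : Set ℝ) J) I.filter} := by
    refine ⟨1, ?_⟩
    rintro l ⟨J', _, rfl⟩
    exact limsup_ratio_le_one I _ J'
  exact le_csSup hbdd hmem

/-- Adding a null set does not change the upper density. -/
lemma upperIDensity_union_null (I : AdmissibleIdeal) (p : ℝ) {C B : Set ℝ}
    (hC : volume C = 0) : upperIDensity I p (C ∪ B) = upperIDensity I p B := by
  have hr : ∀ J : ℕ → Set ℝ, ratioSeq (C ∪ B) J = ratioSeq B J := by
    intro J; funext n
    have : (C ∪ B) ∩ J n = (C ∩ J n) ∪ (B ∩ J n) := union_inter_distrib_right C B (J n)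
    have hnull : volume (C ∩ J n) = 0 := measure_mono_null inter_subset_left hC
    have : volume ((C ∪ B) ∩ J n) = volume (B ∩ J n) := by
      rw [this]
      refine le_antisymm (le_trans (measure_union_le _ _) (by simp [hnull]))
        (measure_mono subset_union_right)
    simp [ratioSeq, this]
  unfold upperIDensity
  congr 1
  ext l
  constructor
  · rintro ⟨J, hJ, rfl⟩; exact ⟨J, hJ, by rw [hr J]⟩
  · rintro ⟨J, hJ, rfl⟩; exact ⟨J, hJ, by rw [hr J]⟩

/-- Every measurable cover of a null set is null. -/
lemma cover_null {C A : Set ℝ} (hA : MeasurableSet A) (h0 : volume A = 0)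
    (hC : IsMeasurableCover C A) : volume C = 0 := by
  obtain ⟨hCm, hAC, hsub⟩ := hC
  have h1 : volume (C \ A) = 0 := hsub (C \ A) (hCm.diff hA) subset_rfl
  have : volume C ≤ volume (C \ A) + volume A := by
    refine le_trans (measure_mono ?_) (measure_union_le _ _)
    intro x hx
    by_cases hxA : x ∈ A
    · exact Or.inr hxA
    · exact Or.inl ⟨hx, hxA⟩
  simpa [h1, h0] using this

/-- A measurable Lebesgue-null set is nowhere dense in the I-sparse set topology:
every member of 𝒰 contained in the 𝒰-closure of `A` is empty. -/
theorem sparseTop_nowhere_dense (I : AdmissibleIdeal) (A : Set ℝ)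
    (hA : MeasurableSet A) (h0 : volume A = 0) :
    ∀ U ∈ sparseTop I,
      U ⊆ ⋂₀ {F : Set ℝ | Fᶜ ∈ sparseTop I ∧ A ⊆ F} → U = ∅ := by
  intro U hU hsub
  -- A itself is in the family of closed supersets
  have hAfam : A ∈ {F : Set ℝ | Fᶜ ∈ sparseTop I ∧ A ⊆ F} := by
    refine ⟨?_, subset_rfl⟩
    intro x _
    intro B hB hBlt C hC
    have hCA : IsMeasurableCover C A := by
      obtain ⟨h1, h2, h3⟩ := hC
      refine ⟨h1, by simpa using h2, fun F hF hFsub => h3 F hF (by simpa using hFsub)⟩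
    have hCnull : volume C = 0 := cover_null hA h0 hCA
    rw [upperIDensity_union_null I x hCnull]
    exact hBlt
  have hUA : U ⊆ A := fun x hx => hsub hx A hAfam
  -- show U is empty
  by_contra hne
  obtain ⟨x, hx⟩ := nonempty_iff_ne_empty.mpr hne
  have hsparse := hU x hx
  have hcover : IsMeasurableCover Set.univ Uᶜ := by
    refine ⟨MeasurableSet.univ, subset_univ _, ?_⟩
    intro F hF hFsub
    have : F ⊆ A := by
      intro y hy
      have := hFsub hy
      simp only [mem_diff, mem_univ, true_and, mem_compl_iff, not_not] at this
      exact hUA this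
    exact measure_mono_null this h0
  have h1 : upperIDensity I x ((Set.univ : Set ℝ) ∪ ∅) < 1 :=
    hsparse ∅ MeasurableSet.empty (by rw [upperIDensity_empty]; norm_num) Set.univ hcover
  rw [union_empty] at h1
  exact absurd h1 (not_lt.mpr (one_le_upperIDensity_univ I x))
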